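/- Let ≤ be a relation on a set V satisfying antisymmetry and such that the associated strict relation < admits no cycles R₁ < ⋯ < R_k < R₁ for k ≥ 2. Define ≤₂ on V × ℤ by (R_b, n_b) ≤₂ (R_a, n_a) iff (R_b ≤ R_a and n_b = n_a) or (R_a ≤ R_b and n_a = n_b − 1). Then ≤₂ admits no cycles: there is no sequence x₁ <₂ x₂ <₂ ⋯ <₂ x_k <₂ x₁ with k ≥ 2, where <₂ is the strict version of ≤₂. -/
import Mathlib


/-- The relation `≤₂` on `V × ℤ` built from a relation `le` on `V`:
`(R_b, n_b) ≤₂ (R_a, n_a)` iff `(R_b ≤ R_a and n_b = n_a)` or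
`(R_a ≤ R_b and n_a = n_b − 1)`. -/
def leTwo {V : Type*} (le : V → V → Prop) (b a : V × ℤ) : Prop :=
  (le b.1 a.1 ∧ b.2 = a.2) ∨ (le a.1 b.1 ∧ a.2 = b.2 - 1)

/-- The strict relation associated to a reflexive relation. -/
def strictOf {α : Type*} (le : α → α → Prop) (x y : α) : Prop :=
  le x y ∧ x ≠ y

/-- If `le` is a reflexive antisymmetric relation on `V` whose strict part admits no
cycles `R₁ < ⋯ < R_k < R₁` (`k ≥ 2`), then the strict part of `≤₂` on `V × ℤ`
admits no cycles either. -/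
theorem leTwo_no_cycles {V : Type*} (le : V → V → Prop)
    (hrefl : ∀ x, le x x)
    (hanti : ∀ x y, le x y → le y x → x = y)
    (hnocycle : ∀ k : ℕ, 2 ≤ k → ∀ f : ℕ → V,
      (∀ i, i + 1 < k → strictOf le (f i) (f (i + 1))) →
      ¬ strictOf le (f (k - 1)) (f 0)) :
    ∀ k : ℕ, 2 ≤ k → ∀ g : ℕ → V × ℤ,
      (∀ i, i + 1 < k → strictOf (leTwo le) (g i) (g (i + 1))) →
      ¬ strictOf (leTwo le) (g (k - 1)) (g 0) := by
  intro k hk g hsteps hclose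
  -- second coordinate is nonincreasing along each strict step
  have hdrop : ∀ b a : V × ℤ, strictOf (leTwo le) b a → a.2 ≤ b.2 := by
    rintro b a ⟨h, _⟩
    rcases h with ⟨_, h2⟩ | ⟨_, h2⟩ <;> omega
  -- monotone along the chain
  have hmono : ∀ j, j < k → ∀ i, i ≤ j → (g j).2 ≤ (g i).2 := by
    intro j
    induction j with
    | zero =>
      intro _ i hi
      have : i = 0 := Nat.le_zero.mp hi
      subst this; exact le_refl _
    | succ n ih =>
      intro hj i hi
      rcases Nat.eq_or_lt_of_le hi with rfl | hi'
      · exact le_refl _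
      · exact le_trans (hdrop _ _ (hsteps n hj)) (ih (by omega) i (by omega))
  have hlast : (g 0).2 ≤ (g (k - 1)).2 := hdrop _ _ hclose
  -- all second coordinates are equal
  have heq : ∀ i, i < k → (g i).2 = (g 0).2 := by
    intro i hi
    have h1 : (g i).2 ≤ (g 0).2 := hmono i hi 0 (Nat.zero_le _)
    have h2 : (g (k - 1)).2 ≤ (g i).2 := hmono (k - 1) (by omega) i (by omega)
    omega
  -- a strict step with equal second coords gives a strict `le` step on firsts
  have hfirst : ∀ b a : V × ℤ, strictOf (leTwo le) b a → a.2 = b.2 →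
      strictOf le b.1 a.1 := by
    rintro b a ⟨h, hne⟩ h2
    rcases h with ⟨h1, _⟩ | ⟨_, h2'⟩
    · refine ⟨h1, fun he => hne ?_⟩
      exact Prod.ext he (by omega)
    · omega
  exact hnocycle k hk (fun i => (g i).1)
    (fun i hi => hfirst _ _ (hsteps i hi)
      (by rw [heq (i + 1) hi, heq i (by omega)]))
    (hfirst _ _ hclose (by rw [heq (k - 1) (by omega)]))
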